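/- Suppose G is a multigraph with a pendant vertex v of degree k ≥ 1 (all k edges join v to a single neighbor u), and let G' = G - v. Then for every m ≥ k, P_DP(G,m) = (m-k)·P_DP(G',m). -/

import Mathlib

/-- A finite-multiplicity loopless multigraph on vertex set `V`:
`mult u v` is the number of parallel edges joining `u` and `v`. -/
structure Multigraph (V : Type) where
  mult : V → V → ℕ
  symm : ∀ u v, mult u v = mult v u
  loopless : ∀ v, mult v v = 0

/-- A full `m`-fold cover of a multigraph `G`.  The list of a vertex `u` is
identified with `{u} × Fin m`; for each ordered pair `(u,v)` and each edge index
`i` (only indices `i < G.mult u v` are relevant) the corresponding perfect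
matching between the two lists is recorded as a permutation of `Fin m`, the two
orientations of an edge giving inverse permutations. -/
structure FullCover {V : Type} (G : Multigraph V) (m : ℕ) where
  perm : V → V → ℕ → (Fin m ≃ Fin m)
  compat : ∀ u v i, perm v u i = (perm u v i).symm

/-- `f` (choosing one list element per vertex) is an `H`-coloring: it avoids all
cross edges of the cover. -/
def FullCover.IsColoring {V : Type} {G : Multigraph V} {m : ℕ}
    (c : FullCover G m) (f : V → Fin m) : Prop :=
  ∀ u v i, i < G.mult u v → (c.perm u v i) (f u) ≠ f v

/-- The number of `H`-colorings of `G` for the cover `c`. -/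
noncomputable def FullCover.numColorings {V : Type} {G : Multigraph V} {m : ℕ}
    (c : FullCover G m) : ℕ :=
  Nat.card {f : V → Fin m // c.IsColoring f}

/-- The DP color function: the minimum number of colorings over all full
`m`-fold covers. -/
noncomputable def Multigraph.PDP {V : Type} (G : Multigraph V) (m : ℕ) : ℕ :=
  sInf {n | ∃ c : FullCover G m, n = c.numColorings}

/-- The dual DP color function: the maximum number of colorings over all full
`m`-fold covers. -/
noncomputable def Multigraph.PDPdual {V : Type} (G : Multigraph V) (m : ℕ) : ℕ :=
  sSup {n | ∃ c : FullCover G m, n = c.numColorings}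

/-- The number of proper `m`-colorings of (the underlying graph of) `G`. -/
noncomputable def Multigraph.properCount {V : Type} (G : Multigraph V) (m : ℕ) : ℕ :=
  Nat.card {f : V → Fin m // ∀ u v, 0 < G.mult u v → f u ≠ f v}

/-- The multigraph obtained from `G` by deleting the vertex `v` (and all edges
incident to it). -/
def Multigraph.deleteVertex {V : Type} (G : Multigraph V) (v : V) :
    Multigraph {x : V // x ≠ v} where
  mult a b := G.mult a.1 b.1
  symm := by intro a b; (try dsimp only); rw [G.symm]
  loopless := by intro a; (try dsimp only); rw [G.loopless]

-- ====== aux ======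

lemma FullCover.ext' {V : Type} {G : Multigraph V} {m : ℕ} {c d : FullCover G m}
    (h : c.perm = d.perm) : c = d := by cases c; cases d; cases h; rfl

def restrictCover {V : Type} {G : Multigraph V} {m : ℕ} (v : V) (c : FullCover G m) :
    FullCover (G.deleteVertex v) m where
  perm a b i := c.perm a.1 b.1 i
  compat a b i := c.compat a.1 b.1 i

lemma card_fiber {m k : ℕ} (g : ℕ → Fin m) :
    Nat.card {j : Fin m // ∀ i, i < k → g i ≠ j}
      = m - ((Finset.range k).image g).card := by
  classical
  have e : {j : Fin m // ∀ i, i < k → g i ≠ j} ≃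
      {j : Fin m // j ∈ Finset.univ \ (Finset.range k).image g} := by
    apply Equiv.subtypeEquivRight
    intro j
    simp [Finset.mem_image, eq_comm]
  rw [Nat.card_congr e, Nat.card_eq_fintype_card, Fintype.card_coe,
    Finset.card_sdiff_of_subset (Finset.subset_univ _), Finset.card_univ, Fintype.card_fin]

section Main
variable {V : Type} [Fintype V] [DecidableEq V]
  {G : Multigraph V} {u v : V} {k : ℕ}

/-- colorings of `c` split as colorings of the restriction plus a choice at `v`. -/
noncomputable def splitEquiv (huv : u ≠ v) (hdeg : G.mult v u = k)
    (hpend : ∀ w, w ≠ u → G.mult v w = 0) {m : ℕ} (c : FullCover G m) :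
    {f : V → Fin m // c.IsColoring f} ≃
      Σ f' : {g : {x : V // x ≠ v} → Fin m // (restrictCover v c).IsColoring g},
        {j : Fin m // ∀ i, i < k → c.perm u v i (f'.1 ⟨u, huv⟩) ≠ j} where
  toFun f := ⟨⟨fun x => f.1 x.1, fun a b i hi => f.2 a.1 b.1 i hi⟩,
    ⟨f.1 v, fun i hi => f.2 u v i (by rw [G.symm u v, hdeg]; exact hi)⟩⟩
  invFun p := ⟨fun x => if h : x = v then p.2.1 else p.1.1 ⟨x, h⟩, by
    intro a b i hi
    by_cases ha : a = v
    · by_cases hbu : b = u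
      · rw [ha, hbu] at hi ⊢
        rw [hdeg] at hi
        simp only [dif_pos rfl, dif_neg huv]
        rw [c.compat]
        intro h
        exact p.2.2 i hi ((Equiv.symm_apply_eq _).1 h).symm
      · exfalso; rw [ha, hpend b hbu] at hi; omega
    · by_cases hb : b = v
      · by_cases hau : a = u
        · rw [hau, hb] at hi ⊢
          rw [G.symm, hdeg] at hi
          simp only [dif_pos rfl, dif_neg huv]
          exact p.2.2 i hi
        · exfalso; rw [hb, G.symm, hpend a hau] at hi; omega
      · simp only [dif_neg ha, dif_neg hb]
        exact p.1.2 ⟨a, ha⟩ ⟨b, hb⟩ i hi⟩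
  left_inv f := by
    apply Subtype.ext; funext x
    by_cases h : x = v
    · subst h; simp
    · simp [h]
  right_inv p := by
    rcases p with ⟨⟨f', hf'⟩, j, hj⟩
    have h1 : (fun x : {x : V // x ≠ v} =>
        (fun y => if h : y = v then j else f' ⟨y, h⟩) x.1) = f' := by
      funext x
      simp [x.2]
    refine Sigma.ext (Subtype.ext h1) ((Subtype.heq_iff_coe_eq ?_).2 ?_)
    · intro x
      simp [huv]
    · simp

end Main

attribute [local instance] Classical.propDecidable

set_option maxHeartbeats 1000000

open Fin.NatCast

section Main2
variable {V : Type} [Fintype V] [DecidableEq V]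
  {G : Multigraph V} {u v : V} {k : ℕ}

lemma count_formula (huv : u ≠ v) (hdeg : G.mult v u = k)
    (hpend : ∀ w, w ≠ u → G.mult v w = 0) {m : ℕ} (c : FullCover G m) :
    c.numColorings = ∑ f' : {g : {x : V // x ≠ v} → Fin m // (restrictCover v c).IsColoring g},
      (m - ((Finset.range k).image (fun i => c.perm u v i (f'.1 ⟨u, huv⟩))).card) := by
  classical
  rw [FullCover.numColorings, Nat.card_congr (splitEquiv huv hdeg hpend c),
    Nat.card_eq_fintype_card, Fintype.card_sigma]
  refine Finset.sum_congr rfl fun f' _ => ?_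
  rw [← Nat.card_eq_fintype_card, card_fiber]

lemma lower_bound (huv : u ≠ v) (hdeg : G.mult v u = k)
    (hpend : ∀ w, w ≠ u → G.mult v w = 0) {m : ℕ} (c : FullCover G m) :
    (m - k) * (restrictCover v c).numColorings ≤ c.numColorings := by
  classical
  rw [count_formula huv hdeg hpend c, FullCover.numColorings, Nat.card_eq_fintype_card]
  calc (m - k) * Fintype.card {g : {x : V // x ≠ v} → Fin m // (restrictCover v c).IsColoring g}
      = ∑ _f' : {g : {x : V // x ≠ v} → Fin m // (restrictCover v c).IsColoring g}, (m - k) := by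
        rw [Finset.sum_const, Finset.card_univ, smul_eq_mul, mul_comm]
    _ ≤ _ := by
        refine Finset.sum_le_sum fun f' _ => ?_
        refine Nat.sub_le_sub_left ?_ m
        exact le_trans Finset.card_image_le (le_of_eq (Finset.card_range k))

def extendCover (huv : u ≠ v) {m : ℕ} [NeZero m]
    (c' : FullCover (G.deleteVertex v) m) : FullCover G m where
  perm a b i :=
    if ha : a = v then (if b = u then (Equiv.addRight (i : Fin m)).symm else Equiv.refl _)
    else if hb : b = v then (if a = u then Equiv.addRight (i : Fin m) else Equiv.refl _)
    else c'.perm ⟨a, ha⟩ ⟨b, hb⟩ i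
  compat a b i := by
    (try dsimp only)
    by_cases ha : a = v
    · by_cases hb : b = v
      · simp [ha, hb, Ne.symm huv]
      · by_cases hbu : b = u
        · simp [ha, hb, hbu, huv, Ne.symm huv]
        · simp [ha, hb, hbu, huv, Ne.symm huv]
    · by_cases hb : b = v
      · by_cases hau : a = u
        · simp [ha, hb, hau, huv, Ne.symm huv]
        · simp [ha, hb, hau, huv, Ne.symm huv]
      · simp [ha, hb, c'.compat ⟨a, ha⟩ ⟨b, hb⟩ i]

lemma restrict_extend (huv : u ≠ v) {m : ℕ} [NeZero m]
    (c' : FullCover (G.deleteVertex v) m) :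
    restrictCover v (extendCover huv c') = c' := by
  apply FullCover.ext'
  funext a b i
  show (extendCover huv c').perm a.1 b.1 i = c'.perm a b i
  simp only [extendCover, dif_neg a.2, dif_neg b.2]

lemma extend_count (huv : u ≠ v) (hdeg : G.mult v u = k)
    (hpend : ∀ w, w ≠ u → G.mult v w = 0) {m : ℕ} (hm : k ≤ m) [NeZero m]
    (c' : FullCover (G.deleteVertex v) m) :
    (extendCover huv c').numColorings = (m - k) * c'.numColorings := by
  classical
  rw [count_formula huv hdeg hpend, restrict_extend huv c']
  have hperm : ∀ i : ℕ, (extendCover huv c' : FullCover G m).perm u v i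
      = Equiv.addRight (i : Fin m) := by
    intro i
    simp [extendCover, huv]
  have himg : ∀ a : Fin m,
      ((Finset.range k).image (fun i => (extendCover huv c').perm u v i a)).card = k := by
    intro a
    rw [Finset.card_image_of_injOn, Finset.card_range]
    intro i hi j hj hij
    rw [Finset.mem_coe, Finset.mem_range] at hi hj
    simp only [hperm, Equiv.coe_addRight] at hij
    have : (i : Fin m) = (j : Fin m) := by
      exact add_left_cancel hij
    have hv : (i : Fin m).val = (j : Fin m).val := by rw [this]
    rwa [Fin.val_cast_of_lt (lt_of_lt_of_le hi hm),
      Fin.val_cast_of_lt (lt_of_lt_of_le hj hm)] at hv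
  calc (∑ f' : {g : {x : V // x ≠ v} → Fin m // c'.IsColoring g},
        (m - ((Finset.range k).image
          (fun i => (extendCover huv c').perm u v i (f'.1 ⟨u, huv⟩))).card))
      = ∑ _f' : {g : {x : V // x ≠ v} → Fin m // c'.IsColoring g}, (m - k) := by
        refine Finset.sum_congr rfl fun f' _ => ?_
        rw [himg]
    _ = (m - k) * c'.numColorings := by
        rw [Finset.sum_const, Finset.card_univ, smul_eq_mul, mul_comm,
          FullCover.numColorings, Nat.card_eq_fintype_card]

end Main2

/-- If `v` is a pendant vertex of degree `k ≥ 1` in the multigraph `G` (all `k`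
edges join `v` to the single neighbor `u`) and `G' = G - v`, then for every
`m ≥ k`, `P_DP(G,m) = (m-k)·P_DP(G',m)`. -/
theorem PDP_pendant {V : Type} [Fintype V] [DecidableEq V]
    (G : Multigraph V) (u v : V) (k : ℕ) (hk : 1 ≤ k) (huv : u ≠ v)
    (hdeg : G.mult v u = k) (hpend : ∀ w, w ≠ u → G.mult v w = 0)
    (m : ℕ) (hm : k ≤ m) :
    G.PDP m = (m - k) * (G.deleteVertex v).PDP m := by
  classical
  haveI : NeZero m := ⟨by omega⟩
  have hS'ne : {n | ∃ c : FullCover (G.deleteVertex v) m, n = c.numColorings}.Nonempty :=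
    ⟨_, ⟨⟨fun _ _ _ => Equiv.refl _, by intro a b i; simp⟩, rfl⟩⟩
  obtain ⟨c'0, hc'0⟩ : (G.deleteVertex v).PDP m ∈
      {n | ∃ c : FullCover (G.deleteVertex v) m, n = c.numColorings} :=
    Nat.sInf_mem hS'ne
  apply le_antisymm
  · calc G.PDP m ≤ (extendCover huv c'0).numColorings := Nat.sInf_le ⟨_, rfl⟩
      _ = (m - k) * c'0.numColorings := extend_count huv hdeg hpend hm c'0
      _ = (m - k) * (G.deleteVertex v).PDP m := by rw [← hc'0]
  · refine le_csInf ⟨_, ⟨⟨fun _ _ _ => Equiv.refl _, by intro a b i; simp⟩, rfl⟩⟩ ?_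
    rintro n ⟨c, rfl⟩
    calc (m - k) * (G.deleteVertex v).PDP m
        ≤ (m - k) * (restrictCover v c).numColorings :=
          Nat.mul_le_mul_left _ (Nat.sInf_le ⟨_, rfl⟩)
      _ ≤ c.numColorings := lower_bound huv hdeg hpend c
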